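/- Let V(K_{m,m}) = V(K_2) × V(K_m) with edges [x,y] whenever p₁(x) ≠ p₁(y), and let S be an RSP-relation on E(K_m). Define R on E(K_{m,m}) by (e,f) ∈ R iff either |p₂(e)| = |p₂(f)| = 1, or |p₂(e)| = |p₂(f)| = 2 and (p₂(e), p₂(f)) ∈ S. Then R is an RSP-relation on E(K_{m,m}). -/

import Mathlib

open SimpleGraph

variable {V : Type*}

/-- An equivalence relation on a set `E` of edges: reflexive on `E`, symmetric, transitive,
and only relating elements of `E`. -/
structure IsEquivOn (R : Sym2 V → Sym2 V → Prop) (E : Set (Sym2 V)) : Prop where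
  refl : ∀ e ∈ E, R e e
  symm : ∀ {e f}, R e f → R f e
  trans : ∀ {e f g}, R e f → R f g → R e g
  mem_left : ∀ {e f}, R e f → e ∈ E
  mem_right : ∀ {e f}, R e f → f ∈ E

/-- `R` is an RSP-relation on `G`: an equivalence relation on `E(G)` such that any two adjacent
edges in distinct classes span a square (4-cycle) with opposite edges in the same class. -/
def IsRSP (G : SimpleGraph V) (R : Sym2 V → Sym2 V → Prop) : Prop :=
  IsEquivOn R G.edgeSet ∧
  ∀ x y z : V, G.Adj x y → G.Adj x z → y ≠ z → ¬ R s(x, y) s(x, z) →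
    ∃ w : V, w ≠ x ∧ w ≠ y ∧ w ≠ z ∧ G.Adj y w ∧ G.Adj z w ∧
      R s(x, y) s(z, w) ∧ R s(x, z) s(y, w)

/-- A finest RSP-relation: an RSP-relation such that every finer RSP-relation coincides
with it. -/
def IsFinestRSP (G : SimpleGraph V) (R : Sym2 V → Sym2 V → Prop) : Prop :=
  IsRSP G R ∧ ∀ S : Sym2 V → Sym2 V → Prop, IsRSP G S →
    (∀ e f, S e f → R e f) → (∀ e f, R e f → S e f)

/-- `K_{m,m}` realized on the vertex set `Fin 2 × Fin m`: two vertices are adjacent iff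
they differ in the first coordinate. -/
def Kmm (m : ℕ) : SimpleGraph (Fin 2 × Fin m) where
  Adj x y := x.1 ≠ y.1
  symm := ⟨fun _ _ h => h.symm⟩
  loopless := ⟨fun _ h => h rfl⟩

/-- `|p₂(e)| = 1`: the endpoints of `e` agree in the second coordinate. -/
def diagEdge (m : ℕ) (e : Sym2 (Fin 2 × Fin m)) : Prop :=
  ∃ u v : Fin 2 × Fin m, e = s(u, v) ∧ u.2 = v.2

/-- Lifting an RSP-relation `S` on `E(K_m)` to `E(K_{m,m})`: edges with `|p₂(e)| = 1` form
one class; other edges are related iff their second projections are `S`-related. -/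
def KmmRel (m : ℕ) (S : Sym2 (Fin m) → Sym2 (Fin m) → Prop)
    (e f : Sym2 (Fin 2 × Fin m)) : Prop :=
  e ∈ (Kmm m).edgeSet ∧ f ∈ (Kmm m).edgeSet ∧
    ((diagEdge m e ∧ diagEdge m f) ∨
     (¬ diagEdge m e ∧ ¬ diagEdge m f ∧
       S (Sym2.map Prod.snd e) (Sym2.map Prod.snd f)))


lemma diag_iff (m : ℕ) (u v : Fin 2 × Fin m) : diagEdge m s(u, v) ↔ u.2 = v.2 := by
  constructor
  · rintro ⟨a, b, h, hab⟩
    rw [Sym2.eq_iff] at h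
    rcases h with ⟨rfl, rfl⟩ | ⟨rfl, rfl⟩
    · exact hab
    · exact hab.symm
  · exact fun h => ⟨u, v, rfl, h⟩

lemma kmm_mem (m : ℕ) (u v : Fin 2 × Fin m) :
    s(u, v) ∈ (Kmm m).edgeSet ↔ u.1 ≠ v.1 := by
  rw [SimpleGraph.mem_edgeSet]; rfl

lemma top_mem (m : ℕ) (a b : Fin m) :
    s(a, b) ∈ (⊤ : SimpleGraph (Fin m)).edgeSet ↔ a ≠ b := by
  rw [SimpleGraph.mem_edgeSet]; simp

lemma fin2_eq (a b c : Fin 2) (h1 : a ≠ b) (h2 : c ≠ b) : a = c := by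
  fin_cases a <;> fin_cases b <;> fin_cases c <;> simp_all

/-- The lift to `E(K_{m,m})` of an RSP-relation on `E(K_m)` is an RSP-relation. -/
theorem stmt11 (m : ℕ) (S : Sym2 (Fin m) → Sym2 (Fin m) → Prop)
    (hS : IsRSP (⊤ : SimpleGraph (Fin m)) S) :
    IsRSP (Kmm m) (KmmRel m S) := by
  obtain ⟨⟨Srefl, Ssymm, Strans, SmemL, SmemR⟩, Hsq⟩ := hS
  constructor
  · constructor
    · intro e he
      induction e using Sym2.ind with
      | _ u v =>
        refine ⟨he, he, ?_⟩
        by_cases hd : diagEdge m s(u, v)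
        · exact Or.inl ⟨hd, hd⟩
        · refine Or.inr ⟨hd, hd, Srefl _ ?_⟩
          rw [show Sym2.map Prod.snd s(u, v) = s(u.2, v.2) from rfl, top_mem]
          exact fun h => hd ((diag_iff m u v).mpr h)
    · rintro e f ⟨he, hf, h⟩
      refine ⟨hf, he, ?_⟩
      rcases h with ⟨de, df⟩ | ⟨ne1, nf, hs⟩
      · exact Or.inl ⟨df, de⟩
      · exact Or.inr ⟨nf, ne1, Ssymm hs⟩
    · rintro e f g ⟨he, hf, h1⟩ ⟨_, hg, h2⟩
      refine ⟨he, hg, ?_⟩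
      rcases h1 with ⟨de, df⟩ | ⟨ne1, nf, hs1⟩ <;>
        rcases h2 with ⟨df', dg⟩ | ⟨nf', ng, hs2⟩
      · exact Or.inl ⟨de, dg⟩
      · exact absurd df nf'
      · exact absurd df' nf
      · exact Or.inr ⟨ne1, ng, Strans hs1 hs2⟩
    · rintro e f ⟨he, _, _⟩; exact he
    · rintro e f ⟨_, hf, _⟩; exact hf
  · intro x y z hxy hxz hyz hR
    have hyx : y.1 ≠ x.1 := fun h => hxy h.symm
    have hzx : z.1 ≠ x.1 := fun h => hxz h.symm
    have hyz1 : y.1 = z.1 := fin2_eq y.1 x.1 z.1 hyx hzx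
    have he1 : s(x, y) ∈ (Kmm m).edgeSet := (kmm_mem m x y).mpr hxy
    have he2 : s(x, z) ∈ (Kmm m).edgeSet := (kmm_mem m x z).mpr hxz
    by_cases d1 : x.2 = y.2 <;> by_cases d2 : x.2 = z.2
    · exact absurd ⟨he1, he2, Or.inl ⟨(diag_iff m x y).mpr d1, (diag_iff m x z).mpr d2⟩⟩ hR
    · -- e1 diag, e2 not
      refine ⟨(x.1, z.2), ?_, ?_, ?_, hyx, hzx, ?_, ?_⟩
      · exact fun h => d2 (congrArg Prod.snd h).symm
      · exact fun h => hxy (show x.1 = y.1 by rw [← h])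
      · exact fun h => hxz (show x.1 = z.1 by rw [← h])
      · exact ⟨he1, (kmm_mem m z _).mpr hzx,
          Or.inl ⟨(diag_iff m x y).mpr d1, (diag_iff m z _).mpr rfl⟩⟩
      · refine ⟨he2, (kmm_mem m y _).mpr hyx, Or.inr ⟨?_, ?_, ?_⟩⟩
        · exact fun h => d2 ((diag_iff m x z).mp h)
        · exact fun h => d2 (d1.trans ((diag_iff m y (x.1, z.2)).mp h))
        · show S s(x.2, z.2) s(y.2, z.2)
          rw [← d1]
          exact Srefl _ ((top_mem m _ _).mpr d2)
    · -- e2 diag, e1 not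
      refine ⟨(x.1, y.2), ?_, ?_, ?_, hyx, hzx, ?_, ?_⟩
      · exact fun h => d1 (congrArg Prod.snd h).symm
      · exact fun h => hxy (show x.1 = y.1 by rw [← h])
      · exact fun h => hxz (show x.1 = z.1 by rw [← h])
      · refine ⟨he1, (kmm_mem m z _).mpr hzx, Or.inr ⟨?_, ?_, ?_⟩⟩
        · exact fun h => d1 ((diag_iff m x y).mp h)
        · exact fun h => d1 (d2.trans ((diag_iff m z (x.1, y.2)).mp h))
        · show S s(x.2, y.2) s(z.2, y.2)
          rw [← d2]
          exact Srefl _ ((top_mem m _ _).mpr d1)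
      · exact ⟨he2, (kmm_mem m y _).mpr hyx,
          Or.inl ⟨(diag_iff m x z).mpr d2, (diag_iff m y _).mpr rfl⟩⟩
    · -- both nondiag
      have hbc : y.2 ≠ z.2 := fun h => hyz (Prod.ext hyz1 h)
      have hnS : ¬ S s(x.2, y.2) s(x.2, z.2) := by
        intro hs
        exact hR ⟨he1, he2, Or.inr ⟨fun h => d1 ((diag_iff m x y).mp h),
          fun h => d2 ((diag_iff m x z).mp h), hs⟩⟩
      obtain ⟨d, hdx, hdy, hdz, _, _, S1, S2⟩ :=
        Hsq x.2 y.2 z.2 (by simpa using d1) (by simpa using d2) hbc hnS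
      refine ⟨(x.1, d), ?_, ?_, ?_, hyx, hzx, ?_, ?_⟩
      · exact fun h => hdx (congrArg Prod.snd h)
      · exact fun h => hxy (show x.1 = y.1 by rw [← h])
      · exact fun h => hxz (show x.1 = z.1 by rw [← h])
      · refine ⟨he1, (kmm_mem m z _).mpr hzx, Or.inr ⟨?_, ?_, S1⟩⟩
        · exact fun h => d1 ((diag_iff m x y).mp h)
        · exact fun h => hdz ((diag_iff m z (x.1, d)).mp h).symm
      · refine ⟨he2, (kmm_mem m y _).mpr hyx, Or.inr ⟨?_, ?_, S2⟩⟩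
        · exact fun h => d2 ((diag_iff m x z).mp h)
        · exact fun h => hdy ((diag_iff m y (x.1, d)).mp h).symm
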